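/- Fix the shared-seed coordinated sampling setup and a function f : V → ℝ_{≥0}. For every v ∈ V, the lower bound function u ↦ f̲^{(v)}(u) is left-continuous on (0,1]: for every ρ ∈ (0,1], lim_{η→ρ⁻} f̲^{(v)}(η) = f̲^{(v)}(ρ). -/

import Mathlib

open MeasureTheory Set Filter Topology

noncomputable section

/-- A shared-seed coordinated sampling scheme on a data domain `V ⊆ ℝ_{≥0}^r`:
continuous non-decreasing seed-to-threshold maps `τ i : [0,1] → ℝ` whose range
infimum is at most the infimum of the `i`-th coordinate over the domain. -/
structure CoordScheme (r : ℕ) where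
  V : Set (Fin r → ℝ)
  τ : Fin r → ℝ → ℝ
  V_nonneg : ∀ v ∈ V, ∀ i, 0 ≤ v i
  τ_cont : ∀ i, ContinuousOn (τ i) (Set.Icc 0 1)
  τ_mono : ∀ i, MonotoneOn (τ i) (Set.Icc 0 1)
  τ_inf : ∀ i, sInf (τ i '' Set.Icc 0 1) ≤ sInf ((fun v => v i) '' V)

namespace CoordScheme

variable {r : ℕ}

/-- The set `S(u,v)` of sampled entries: `i` is sampled iff `v i ≥ τ i u`. -/
def sampled (C : CoordScheme r) (u : ℝ) (v : Fin r → ℝ) : Set (Fin r) :=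
  {i | C.τ i u ≤ v i}

/-- The consistent set `V*(u,v)` of data vectors consistent with the outcome `S(u,v)`. -/
def Vstar (C : CoordScheme r) (u : ℝ) (v : Fin r → ℝ) : Set (Fin r → ℝ) :=
  {z ∈ C.V | ∀ i, (C.τ i u ≤ v i → z i = v i) ∧ (v i < C.τ i u → z i < C.τ i u)}

/-- The lower bound function `f̲(u,v) = inf { f z : z ∈ V*(u,v) }`. -/
def lb (C : CoordScheme r) (f : (Fin r → ℝ) → ℝ) (u : ℝ) (v : Fin r → ℝ) : ℝ :=
  sInf (f '' C.Vstar u v)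

/-- An estimator: an integrable function of the outcome (it takes equal values on
data vectors consistent with the same outcome). -/
structure IsEstimator (C : CoordScheme r) (fhat : ℝ → (Fin r → ℝ) → ℝ) : Prop where
  integrable : ∀ v ∈ C.V, IntegrableOn (fun u => fhat u v) (Set.Ioc (0:ℝ) 1)
  consistent : ∀ u ∈ Set.Ioc (0:ℝ) 1, ∀ v ∈ C.V, ∀ z ∈ C.Vstar u v, fhat u v = fhat u z

/-- A nonnegative estimator. -/
def Nonneg (C : CoordScheme r) (fhat : ℝ → (Fin r → ℝ) → ℝ) : Prop :=
  ∀ u ∈ Set.Ioc (0:ℝ) 1, ∀ v ∈ C.V, 0 ≤ fhat u v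

/-- An unbiased estimator of `f`. -/
def Unbiased (C : CoordScheme r) (f : (Fin r → ℝ) → ℝ)
    (fhat : ℝ → (Fin r → ℝ) → ℝ) : Prop :=
  ∀ v ∈ C.V, (∫ u in Set.Ioc (0:ℝ) 1, fhat u v) = f v

end CoordScheme

/-- Lower convex hull of `g` on `(0,1]`: the pointwise largest convex function
bounded above by `g` there. -/
def lowerHull (g : ℝ → ℝ) (u : ℝ) : ℝ :=
  sSup {y : ℝ | ∃ h : ℝ → ℝ, ConvexOn ℝ (Set.Ioc (0:ℝ) 1) h ∧
      (∀ x ∈ Set.Ioc (0:ℝ) 1, h x ≤ g x) ∧ y = h u}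

namespace CoordScheme

variable {r : ℕ}

/-- The `v`-optimal estimates: the negated derivative of the lower hull of the
lower-bound function `u ↦ f̲(u,v)`. -/
def optEst (C : CoordScheme r) (f : (Fin r → ℝ) → ℝ) (v : Fin r → ℝ) (u : ℝ) : ℝ :=
  -deriv (lowerHull (fun x => C.lb f x v)) u

/-- Cumulative integral `∫_{2^{-j}}^1` of the J estimator (by its defining recursion):
`Jint (j+1) = Jint j + (value on `(2^{-j-1},2^{-j}]`) ⬝ 2^{-j-1}`. -/
def Jint (C : CoordScheme r) (f : (Fin r → ℝ) → ℝ) (v : Fin r → ℝ) : ℕ → ℝ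
  | 0 => 0
  | (j+1) => Jint C f v j +
      ((2:ℝ) ^ (j+1) * (C.lb f ((2:ℝ) ^ (-(j:ℤ))) v - Jint C f v j)) * (2:ℝ) ^ (-(j:ℤ) - 1)

/-- The (constant) value of the J estimator on the dyadic interval `(2^{-j-1}, 2^{-j}]`.
For `j = 0` this is `2 ⬝ f̲(1,v)`; for `j ≥ 1` it is
`2^{j+1} ⬝ ( f̲(2^{-j},v) − ∫_{2^{-j}}^1 f̂⁽ᴶ⁾(x,v) dx )`. -/
def Jval (C : CoordScheme r) (f : (Fin r → ℝ) → ℝ) (v : Fin r → ℝ) (j : ℕ) : ℝ :=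
  (2:ℝ) ^ (j+1) * (C.lb f ((2:ℝ) ^ (-(j:ℤ))) v - Jint C f v j)

/-- The J estimator `f̂⁽ᴶ⁾(u,v)`: on `u ∈ (2^{-j-1}, 2^{-j}]` it takes the value `Jval j`. -/
def Jest (C : CoordScheme r) (f : (Fin r → ℝ) → ℝ) (u : ℝ) (v : Fin r → ℝ) : ℝ :=
  C.Jval f v ⌊-Real.logb 2 u⌋₊

end CoordScheme

/-- the lower bound function `u ↦ f̲⁽ᵛ⁾(u)` is left-continuous on `(0,1]`. -/
theorem stmt2 {r : ℕ} (C : CoordScheme r) (f : (Fin r → ℝ) → ℝ)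
    (hf : ∀ v ∈ C.V, 0 ≤ f v) (v : Fin r → ℝ) (hv : v ∈ C.V)
    (ρ : ℝ) (hρ : ρ ∈ Set.Ioc (0:ℝ) 1) :
    Filter.Tendsto (fun η => C.lb f η v) (𝓝[<] ρ) (𝓝 (C.lb f ρ v)) := by
  have hρ1 : ρ ∈ Set.Icc (0:ℝ) 1 := ⟨hρ.1.le, hρ.2⟩
  have hself : ∀ u, v ∈ C.Vstar u v := fun u =>
    ⟨hv, fun i => ⟨fun _ => rfl, fun h => h⟩⟩
  have hbdd : ∀ u : ℝ, BddBelow (f '' C.Vstar u v) := by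
    intro u
    refine ⟨0, ?_⟩
    rintro y ⟨z, hz, rfl⟩
    exact hf z hz.1
  have hne : ∀ u : ℝ, (f '' C.Vstar u v).Nonempty := fun u => ⟨f v, v, hself u, rfl⟩
  have hIcc_mem : Set.Icc (0:ℝ) 1 ∈ 𝓝[<] ρ := by
    have h1 : Set.Ioo (0:ℝ) ρ ∈ 𝓝[<] ρ :=
      Ioo_mem_nhdsLT_of_mem ⟨hρ.1, le_refl ρ⟩
    exact Filter.mem_of_superset h1 (fun x hx => ⟨hx.1.le, hx.2.le.trans hρ.2⟩)
  have hle : 𝓝[<] ρ ≤ 𝓝[Set.Icc (0:ℝ) 1] ρ := nhdsWithin_le_iff.2 hIcc_mem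
  have htend : ∀ i, Filter.Tendsto (C.τ i) (𝓝[<] ρ) (𝓝 (C.τ i ρ)) := fun i =>
    ((C.τ_cont i ρ hρ1).tendsto).mono_left hle
  have hmono : ∀ᶠ η in 𝓝[<] ρ, ∀ i, C.τ i η ≤ C.τ i ρ := by
    filter_upwards [hIcc_mem, self_mem_nhdsWithin] with η hη hη' i
    exact C.τ_mono i hη hρ1 (le_of_lt hη')
  rw [tendsto_order]
  constructor
  · intro a ha
    have hE1 : ∀ᶠ η in 𝓝[<] ρ, ∀ i, v i < C.τ i ρ → v i < C.τ i η := by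
      rw [Filter.eventually_all]
      intro i
      by_cases h : v i < C.τ i ρ
      · filter_upwards [(htend i).eventually (eventually_gt_nhds h)] with η hη _
        exact hη
      · filter_upwards with η h'; exact absurd h' h
    filter_upwards [hE1, hmono] with η h1 h2
    have hsub : C.Vstar η v ⊆ C.Vstar ρ v := by
      rintro z ⟨hzV, hz⟩
      refine ⟨hzV, fun i => ⟨?_, ?_⟩⟩
      · intro hτ; exact (hz i).1 ((h2 i).trans hτ)
      · intro hτ; exact lt_of_lt_of_le ((hz i).2 (h1 i hτ)) (h2 i)
    calc a < C.lb f ρ v := ha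
      _ ≤ C.lb f η v := csInf_le_csInf (hbdd ρ) (hne η) (Set.image_mono (f := f) hsub)
  · intro a ha
    obtain ⟨y, ⟨z, hz, rfl⟩, hy⟩ := exists_lt_of_csInf_lt (hne ρ) ha
    have hE2 : ∀ᶠ η in 𝓝[<] ρ, ∀ i, v i < C.τ i ρ → v i < C.τ i η ∧ z i < C.τ i η := by
      rw [Filter.eventually_all]
      intro i
      by_cases h : v i < C.τ i ρ
      · have hz' : z i < C.τ i ρ := (hz.2 i).2 h
        filter_upwards [(htend i).eventually (eventually_gt_nhds h),
          (htend i).eventually (eventually_gt_nhds hz')] with η ha hb _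
        exact ⟨ha, hb⟩
      · filter_upwards with η h'; exact absurd h' h
    filter_upwards [hE2, hmono] with η h1 h2
    have hzmem : z ∈ C.Vstar η v := by
      refine ⟨hz.1, fun i => ⟨?_, ?_⟩⟩
      · intro hτ
        rcases le_or_gt (C.τ i ρ) (v i) with h | h
        · exact (hz.2 i).1 h
        · exact absurd hτ (not_le.2 (h1 i h).1)
      · intro hτ
        exact (h1 i (lt_of_lt_of_le hτ (h2 i))).2
    calc C.lb f η v ≤ f z := csInf_le (hbdd η) ⟨z, hzmem, rfl⟩
      _ < a := hy
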